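/- In the ring ℤ[[q]] of formal power series over ℤ, the generating function identity φ(q) · ∑_{n≥0} p̄(n)(−1)^n q^n = 1 holds; equivalently, ∑_{n≥0} p̄(n)(−q)^n is the multiplicative inverse of φ(q). -/

import Mathlib

/-- Number of overpartitions of `n`: pairs of a partition of `k ≤ n` into distinct parts
together with an ordinary partition of `n - k`. -/
def overpartition (n : ℕ) : ℕ :=
  ∑ k ∈ Finset.range (n + 1),
    (Nat.Partition.distincts k).card * Fintype.card (Nat.Partition (n - k))

/-- The Ramanujan theta function `φ(q) = ∑_{n ∈ ℤ} q^{n²}` as a formal power series over `ℤ`: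
its `n`-th coefficient is the number of integers `m` with `m² = n`. -/
noncomputable def phiq : PowerSeries ℤ :=
  PowerSeries.mk fun n => (Set.ncard {m : ℤ | m ^ 2 = (n : ℤ)} : ℤ)

namespace OPF
noncomputable section
open PowerSeries Finset

local notation "P" => PowerSeries ℤ

def qb (q : P) : ℕ → ℕ → P
  | _, 0 => 1
  | 0, _+1 => 0
  | m+1, k+1 => qb q m k + q^(k+1) * qb q m (k+1)

@[simp] lemma qb_zero (q : P) (m : ℕ) : qb q m 0 = 1 := by cases m <;> rfl

lemma qb_succ (q : P) (m k : ℕ) :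
    qb q (m+1) (k+1) = qb q m k + q^(k+1) * qb q m (k+1) := rfl

lemma qb_of_lt (q : P) : ∀ {m k}, m < k → qb q m k = 0 := by
  intro m
  induction m with
  | zero => intro k hk; match k, hk with | k+1, _ => rfl
  | succ m ih =>
    intro k hk
    match k, hk with
    | k+1, hk =>
      rw [qb_succ, ih (by omega), ih (by omega), mul_zero, add_zero]

lemma qb_diag (q : P) (m : ℕ) : qb q m m = 1 := by
  induction m with
  | zero => rfl
  | succ m ih => rw [qb_succ, ih, qb_of_lt q (Nat.lt_succ_self m), mul_zero, add_zero]

lemma choose_two_succ (k : ℕ) : (k+1).choose 2 = k.choose 2 + k := by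
  rw [Nat.choose_succ_succ, Nat.choose_one_right, add_comm]

lemma two_choose_two (k : ℕ) : 2 * k.choose 2 + k = k * k := by
  induction k with
  | zero => rfl
  | succ k ih =>
    rw [choose_two_succ]
    have h : (k+1)*(k+1) = k*k + 2*k + 1 := by ring
    omega

/-- The Gauss binomial theorem. -/
lemma qbt (q x : P) (m : ℕ) : ∀ y : P,
    ∏ i ∈ range m, (x + q^i * y)
      = ∑ k ∈ range (m+1), q^(k.choose 2) * qb q m k * x^(m-k) * y^k := by
  induction m with
  | zero => intro y; simp
  | succ m ih =>
    intro y
    rw [prod_range_succ']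
    have h1 : ∏ i ∈ range m, (x + q^(i+1) * y) = ∏ i ∈ range m, (x + q^i * (q*y)) :=
      prod_congr rfl fun i _ => by ring
    rw [h1, ih (q*y), pow_zero, one_mul, mul_add]
    have hSy : (∑ k ∈ range (m+1), q^(k.choose 2) * qb q m k * x^(m-k) * (q*y)^k) * y
        = ∑ k ∈ range (m+1), q^(k.choose 2 + k) * qb q m k * x^(m-k) * y^(k+1) := by
      rw [sum_mul]
      exact sum_congr rfl fun k _ => by rw [mul_pow, pow_add]; ring
    have hSx : (∑ k ∈ range (m+1), q^(k.choose 2) * qb q m k * x^(m-k) * (q*y)^k) * x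
        = ∑ k ∈ range (m+1), q^(k.choose 2 + k) * qb q m k * x^(m+1-k) * y^k := by
      rw [sum_mul]
      refine sum_congr rfl fun k hk => ?_
      have hk' : k ≤ m := Nat.lt_succ_iff.mp (mem_range.mp hk)
      have hx : x^(m-k) * x = x^(m+1-k) := by
        rw [← pow_succ]; congr 1; omega
      rw [mul_pow, pow_add, ← hx]; ring
    rw [hSx, hSy]
    have eterm : ∀ k ∈ range (m+1),
        q^((k+1).choose 2) * qb q (m+1) (k+1) * x^(m+1-(k+1)) * y^(k+1)
          = q^(k.choose 2 + k) * qb q m k * x^(m-k) * y^(k+1)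
            + q^(k.choose 2 + 2*k + 1) * qb q m (k+1) * x^(m-k) * y^(k+1) := by
      intro k _
      rw [qb_succ, choose_two_succ, Nat.succ_sub_succ]
      have h2 : k.choose 2 + 2*k + 1 = (k.choose 2 + k) + (k + 1) := by omega
      rw [h2, pow_add]
      ring
    rw [sum_range_succ' (fun k => q^(k.choose 2) * qb q (m+1) k * x^(m+1-k) * y^k),
      sum_congr rfl eterm, sum_add_distrib]
    have e0 : q^((0:ℕ).choose 2) * qb q (m+1) 0 * x^(m+1-0) * y^0 = x^(m+1) := by
      simp
    rw [e0]
    have hmain : ∑ k ∈ range (m+1), q^(k.choose 2 + k) * qb q m k * x^(m+1-k) * y^k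
        = (∑ k ∈ range (m+1),
            q^(k.choose 2 + 2*k + 1) * qb q m (k+1) * x^(m-k) * y^(k+1)) + x^(m+1) := by
      have hL : ∑ k ∈ range (m+1), q^(k.choose 2 + k) * qb q m k * x^(m+1-k) * y^k
          = (∑ k ∈ range m,
              q^(k.choose 2 + 2*k + 1) * qb q m (k+1) * x^(m-k) * y^(k+1)) + x^(m+1) := by
        rw [sum_range_succ' (fun k => q^(k.choose 2 + k) * qb q m k * x^(m+1-k) * y^k)]
        congr 1
        · refine sum_congr rfl fun k _ => ?_
          rw [choose_two_succ, Nat.succ_sub_succ]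
          have h : k.choose 2 + k + (k + 1) = k.choose 2 + 2*k + 1 := by omega
          rw [h]
        · simp
      have hR : ∑ k ∈ range (m+1), q^(k.choose 2 + 2*k + 1) * qb q m (k+1) * x^(m-k) * y^(k+1)
          = ∑ k ∈ range m, q^(k.choose 2 + 2*k + 1) * qb q m (k+1) * x^(m-k) * y^(k+1) := by
        rw [sum_range_succ, qb_of_lt q (Nat.lt_succ_self m), mul_zero, zero_mul, zero_mul,
          add_zero]
      rw [hL, hR]
    rw [hmain]
    ring

/-- partial product `∏ (1 - q^(i+1))`. -/
def qP (q : P) (m : ℕ) : P := ∏ i ∈ range m, (1 - q^(i+1))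

lemma qP_succ (q : P) (m : ℕ) : qP q (m+1) = qP q m * (1 - q^(m+1)) := prod_range_succ _ _

lemma qb_mul_qP (q : P) : ∀ m k, k ≤ m → qb q m k * qP q k * qP q (m-k) = qP q m := by
  intro m
  induction m with
  | zero => intro k hk; interval_cases k; simp [qP]
  | succ m ih =>
    intro k hk
    match k with
    | 0 => simp [qP]
    | k+1 =>
      rcases Nat.lt_succ_iff_lt_or_eq.mp hk with h | heq
      · have hk1 : k + 1 ≤ m := h
        have hkm : k ≤ m := le_trans (Nat.le_succ k) hk1
        rw [qb_succ, add_mul, add_mul]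
        have t1 : qb q m k * qP q (k+1) * qP q (m+1-(k+1))
            = qP q m * (1 - q^(k+1)) := by
          have h0 : m+1-(k+1) = m-k := by omega
          rw [h0, qP_succ q k]
          have := ih k hkm
          calc qb q m k * (qP q k * (1 - q^(k+1))) * qP q (m-k)
              = qb q m k * qP q k * qP q (m-k) * (1 - q^(k+1)) := by ring
            _ = qP q m * (1 - q^(k+1)) := by rw [this]
        have t2 : q^(k+1) * qb q m (k+1) * qP q (k+1) * qP q (m+1-(k+1))
            = qP q m * (q^(k+1) - q^(m+1)) := by
          have h1 : m+1-(k+1) = (m-(k+1)) + 1 := by omega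
          have h2 : m - (k+1) + 1 = m - k := by omega
          rw [h1, qP_succ q (m-(k+1))]
          have := ih (k+1) hk1
          calc q^(k+1) * qb q m (k+1) * qP q (k+1) * (qP q (m-(k+1)) * (1 - q^(m-(k+1)+1)))
              = qb q m (k+1) * qP q (k+1) * qP q (m-(k+1)) * (q^(k+1) * (1 - q^(m-(k+1)+1))) := by
                ring
            _ = qP q m * (q^(k+1) * (1 - q^(m-(k+1)+1))) := by rw [this]
            _ = qP q m * (q^(k+1) - q^(k+1) * q^(m-(k+1)+1)) := by ring
            _ = qP q m * (q^(k+1) - q^(m+1)) := by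
                rw [← pow_add]
                congr 3
                omega
        rw [t1, t2, qP_succ]
        ring
      · obtain rfl : k = m := by omega
        rw [qb_diag, Nat.sub_self, one_mul]
        simp [qP]

/-! ### The specific products -/

def EE (n : ℕ) : P := qP (X^2) n

def OO (n : ℕ) : P := ∏ i ∈ range n, (1 - X^(2*i+1))

def UU (m : ℕ) : P := ∏ i ∈ range m, (1 - X^(i+1))

def VV (m : ℕ) : P := ∏ i ∈ range m, (1 + X^(i+1))

lemma EE_succ (n : ℕ) : EE (n+1) = EE n * (1 - X^(2*n+2)) := by
  rw [EE, EE, qP_succ]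
  have h : ((X:P)^2)^(n+1) = X^(2*n+2) := by
    rw [← pow_mul, Nat.mul_succ]
  rw [h]

lemma OO_succ (n : ℕ) : OO (n+1) = OO n * (1 - X^(2*n+1)) := prod_range_succ _ _

lemma UU_succ (m : ℕ) : UU (m+1) = UU m * (1 - X^(m+1)) := prod_range_succ _ _

lemma UU_split (n : ℕ) : UU (2*n) = OO n * EE n := by
  induction n with
  | zero => simp [UU, OO, EE, qP]
  | succ n ih =>
    have h : 2*(n+1) = (2*n+1)+1 := by omega
    rw [h, UU_succ, UU_succ, ih, OO_succ, EE_succ]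
    have e1 : 2*n+1+1 = 2*n + 2 := by omega
    rw [e1]
    ring

lemma VV_mul_UU (m : ℕ) : VV m * UU m = EE m := by
  induction m with
  | zero => simp [UU, VV, EE, qP]
  | succ m ih =>
    rw [VV, UU, prod_range_succ, prod_range_succ, ← VV, ← UU, EE_succ, ← ih]
    have h : ((X:P)^(m+1)) * (X^(m+1)) = X^(2*m+2) := by
      rw [← pow_add]
      congr 1
      omega
    calc VV m * (1 + X^(m+1)) * (UU m * (1 - X^(m+1)))
        = VV m * UU m * (1 - X^(m+1) * X^(m+1)) := by ring
      _ = VV m * UU m * (1 - X^(2*m+2)) := by rw [h]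

/-! ### Units and divisibility helpers -/

lemma isUnit_of_cc_one {f : P} (h : constantCoeff f = 1) : IsUnit f :=
  isUnit_iff_constantCoeff.mpr (h ▸ isUnit_one)

lemma cc_one_sub_pow (a : ℕ) (ha : 0 < a) : constantCoeff (1 - (X:P)^a) = 1 := by
  rw [map_sub, map_one, map_pow, constantCoeff_X, zero_pow ha.ne', sub_zero]

lemma isUnit_EE (n : ℕ) : IsUnit (EE n) := by
  apply isUnit_of_cc_one
  rw [EE, qP, map_prod]
  apply prod_eq_one
  intro i _
  rw [← pow_mul]
  exact cc_one_sub_pow _ (by omega)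

lemma EE_ne_zero (n : ℕ) : EE n ≠ 0 := (isUnit_EE n).ne_zero

lemma isUnit_OO (n : ℕ) : IsUnit (OO n) := by
  apply isUnit_of_cc_one
  rw [OO, map_prod]
  apply prod_eq_one
  intro i _
  exact cc_one_sub_pow _ (by omega)

lemma X_dvd_cancel_unit {t : ℕ} {a u : P} (hu : IsUnit u) (h : X^t ∣ a * u) : X^t ∣ a := by
  rcases hu with ⟨w, rfl⟩
  exact Units.dvd_mul_right.mp h

lemma prod_one_sub_dvd {s : Finset ℕ} {t : ℕ} {f : ℕ → P} (h : ∀ i ∈ s, X^t ∣ f i - 1) :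
    X^t ∣ (∏ i ∈ s, f i) - 1 := by
  induction s using Finset.cons_induction with
  | empty => simp
  | cons a s ha ih =>
    rw [prod_cons]
    have e : f a * ∏ i ∈ s, f i - 1 = f a * ((∏ i ∈ s, f i) - 1) + (f a - 1) := by ring
    rw [e]
    exact dvd_add ((ih fun i hi => h i (mem_cons.mpr (Or.inr hi))).mul_left _)
      (h a (mem_cons_self a s))

lemma qP_add (q : P) (a b : ℕ) :
    qP q (a+b) = qP q a * ∏ i ∈ range b, (1 - q^(a+i+1)) := by
  rw [qP, qP, prod_range_add]

/-! ### The exponent bookkeeping -/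

def sq (n k : ℕ) : ℕ := (n-k)*(n-k) + (k-n)*(k-n)

lemma sq_symm (n k : ℕ) (hk : k ≤ 2*n) : sq n k = sq n (2*n-k) := by
  rcases le_total k n with h | h
  · have e1 : n - (2*n-k) = 0 := by omega
    have e2 : 2*n-k-n = n-k := by omega
    have e3 : k - n = 0 := by omega
    rw [sq, sq, e1, e2, e3]
    ring
  · have e1 : n - (2*n-k) = k - n := by omega
    have e2 : 2*n-k-n = 0 := by omega
    have e3 : n - k = 0 := by omega
    rw [sq, sq, e1, e2, e3]
    ring

lemma exp_id (n k : ℕ) (hn : 1 ≤ n) (hk : k ≤ 2*n) :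
    2 * k.choose 2 + (2*n-1)*(2*n-k) = n*(3*n-2) + sq n k := by
  have h2 : 2 * k.choose 2 + k = k * k := two_choose_two k
  have hz : (2 * (k.choose 2 : ℤ) + k = k * k) := by exact_mod_cast h2
  rcases le_total k n with h | h
  · have e3 : k - n = 0 := by omega
    rw [sq, e3, mul_zero, add_zero]
    zify [h, hk, show 1 ≤ 2*n by omega, show 2 ≤ 3*n by omega]
    linear_combination hz
  · have e3 : n - k = 0 := by omega
    rw [sq, e3, zero_mul, zero_add]
    zify [h, hk, show 1 ≤ 2*n by omega, show 2 ≤ 3*n by omega]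
    linear_combination hz

/-! ### The finite Gauss identity -/

lemma prodL (n : ℕ) (hn : 1 ≤ n) :
    ∏ i ∈ range (2*n), ((X:P)^(2*n-1) - X^(2*i)) = (-1)^n * X^(n*(3*n-2)) * (OO n)^2 := by
  have h1 : ∏ i ∈ range n, ((X:P)^(2*n-1) - X^(2*i))
      = (-1)^n * X^(n*(n-1)) * OO n := by
    have hterm : ∀ i ∈ range n, ((X:P)^(2*n-1) - X^(2*i))
        = (-1) * (X^(2*i) * (1 - X^(2*(n-1-i)+1))) := by
      intro i hi
      have hi' : i < n := mem_range.mp hi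
      have he : 2*i + (2*(n-1-i)+1) = 2*n-1 := by omega
      rw [mul_sub, mul_one, ← pow_add, he]
      ring
    rw [prod_congr rfl hterm, prod_mul_distrib, prod_mul_distrib, prod_const,
      prod_pow_eq_pow_sum, card_range]
    have hs : ∑ i ∈ range n, 2*i = n*(n-1) := by
      have h2 := Finset.sum_range_id_mul_two n
      calc ∑ i ∈ range n, 2*i = ∑ i ∈ range n, i*2 := by
            exact sum_congr rfl fun i _ => mul_comm 2 i
        _ = (∑ i ∈ range n, i)*2 := (Finset.sum_mul ..).symm
        _ = n*(n-1) := h2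
    rw [hs, prod_range_reflect (fun i => 1 - (X:P)^(2*i+1)) n, ← OO]
    ring
  have h2 : ∏ i ∈ range n, ((X:P)^(2*n-1) - X^(2*(n+i)))
      = X^((2*n-1)*n) * OO n := by
    have hterm : ∀ i ∈ range n, ((X:P)^(2*n-1) - X^(2*(n+i)))
        = X^(2*n-1) * (1 - X^(2*i+1)) := by
      intro i _
      rw [mul_sub, mul_one, ← pow_add]
      congr 2
      omega
    rw [prod_congr rfl hterm, prod_mul_distrib, prod_const, card_range, ← pow_mul, ← OO]
  have hsplit : ∏ i ∈ range (2*n), ((X:P)^(2*n-1) - X^(2*i))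
      = (∏ i ∈ range n, ((X:P)^(2*n-1) - X^(2*i)))
        * ∏ i ∈ range n, ((X:P)^(2*n-1) - X^(2*(n+i))) := by
    rw [← prod_range_add (fun i => (X:P)^(2*n-1) - X^(2*i)) n n, ← two_mul]
  rw [hsplit, h1, h2]
  have he : n*(n-1) + (2*n-1)*n = n*(3*n-2) := by
    zify [show 1 ≤ n from hn, show 1 ≤ 2*n by omega, show 2 ≤ 3*n by omega]
    ring
  calc (-1:P)^n * X^(n*(n-1)) * OO n * (X^((2*n-1)*n) * OO n)
      = (-1)^n * (X^(n*(n-1)) * X^((2*n-1)*n)) * (OO n)^2 := by ring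
    _ = (-1)^n * X^(n*(3*n-2)) * (OO n)^2 := by rw [← pow_add, he]

lemma star (n : ℕ) (hn : 1 ≤ n) :
    ∑ k ∈ range (2*n+1), (-1:P)^(k+n) * X^(sq n k) * qb (X^2) (2*n) k = (OO n)^2 := by
  have hq := qbt (X^2) (X^(2*n-1)) (2*n) (-1)
  have hL : ∏ i ∈ range (2*n), ((X:P)^(2*n-1) + (X^2)^i * (-1))
      = ∏ i ∈ range (2*n), ((X:P)^(2*n-1) - X^(2*i)) := by
    refine prod_congr rfl fun i _ => ?_
    rw [← pow_mul]
    ring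
  have hterm : ∀ k ∈ range (2*n+1),
      ((X:P)^2)^(k.choose 2) * qb (X^2) (2*n) k * (X^(2*n-1))^(2*n-k) * (-1)^k
        = ((-1)^n * X^(n*(3*n-2))) * ((-1)^(k+n) * X^(sq n k) * qb (X^2) (2*n) k) := by
    intro k hk
    have hk' : k ≤ 2*n := by
      have := mem_range.mp hk
      omega
    have hs : ((-1:P))^n * (-1)^(k+n) = (-1)^k := by
      rw [← pow_add]
      have e : n + (k+n) = k + 2*n := by omega
      rw [e, pow_add, pow_mul]
      norm_num
    have hx : (X:P)^(2*(k.choose 2)) * X^((2*n-1)*(2*n-k)) = X^(n*(3*n-2)) * X^(sq n k) := by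
      rw [← pow_add, ← pow_add, exp_id n k hn hk']
    calc ((X:P)^2)^(k.choose 2) * qb (X^2) (2*n) k * (X^(2*n-1))^(2*n-k) * (-1)^k
        = ((X:P)^(2*(k.choose 2)) * X^((2*n-1)*(2*n-k))) * ((-1)^k * qb (X^2) (2*n) k) := by
          rw [← pow_mul, ← pow_mul]
          ring
      _ = (X^(n*(3*n-2)) * X^(sq n k)) * ((((-1:P))^n * (-1)^(k+n)) * qb (X^2) (2*n) k) := by
          rw [hx, hs]
      _ = ((-1)^n * X^(n*(3*n-2))) * ((-1)^(k+n) * X^(sq n k) * qb (X^2) (2*n) k) := by ring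
  rw [hL, prodL n hn, sum_congr rfl hterm, ← mul_sum] at hq
  have h0 : ((-1:P)^n * X^(n*(3*n-2))) ≠ 0 := by
    apply mul_ne_zero
    · exact pow_ne_zero _ (by norm_num)
    · exact pow_ne_zero _ X_ne_zero
  exact (mul_left_cancel₀ h0 hq).symm


lemma qb_symm (m k : ℕ) (hk : k ≤ m) : qb (X^2) m k = qb (X^2) m (m-k) := by
  have pf1 := qb_mul_qP (X^2) m k hk
  have pf2 := qb_mul_qP (X^2) m (m-k) (Nat.sub_le m k)
  rw [show m - (m-k) = k from by omega] at pf2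
  have h : qb (X^2) m k * (qP (X^2) k * qP (X^2) (m-k))
      = qb (X^2) m (m-k) * (qP (X^2) k * qP (X^2) (m-k)) := by
    calc qb (X^2) m k * (qP (X^2) k * qP (X^2) (m-k))
        = qb (X^2) m k * qP (X^2) k * qP (X^2) (m-k) := by ring
      _ = qb (X^2) m (m-k) * qP (X^2) (m-k) * qP (X^2) k := by rw [pf1, ← pf2]
      _ = qb (X^2) m (m-k) * (qP (X^2) k * qP (X^2) (m-k)) := by ring
  exact mul_right_cancel₀ (mul_ne_zero (EE_ne_zero k) (EE_ne_zero (m-k))) h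

lemma qb_approx (n k : ℕ) (hk : k ≤ n) :
    X^(2*k+2) ∣ qb (X^2) (2*n) k * EE n - 1 := by
  have pf : qb (X^2) (2*n) k * EE k * EE (2*n-k) = EE (2*n) :=
    qb_mul_qP (X^2) (2*n) k (by omega)
  have hG : EE n = EE k * ∏ i ∈ range (n-k), (1 - ((X:P)^2)^(k+i+1)) := by
    have h := qP_add (X^2) k (n-k)
    rw [show k + (n-k) = n from by omega] at h
    exact h
  have hH : EE (2*n) = EE (2*n-k) * ∏ i ∈ range k, (1 - ((X:P)^2)^((2*n-k)+i+1)) := by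
    have h := qP_add (X^2) (2*n-k) k
    rw [show (2*n-k) + k = 2*n from by omega] at h
    exact h
  set Gp := ∏ i ∈ range (n-k), (1 - ((X:P)^2)^(k+i+1)) with hGp
  set Hp := ∏ i ∈ range k, (1 - ((X:P)^2)^((2*n-k)+i+1)) with hHp
  have key : (qb (X^2) (2*n) k * EE n - 1) * (EE k * EE (2*n-k))
      = (EE k * EE (2*n-k)) * (Gp * Hp - 1) := by
    calc (qb (X^2) (2*n) k * EE n - 1) * (EE k * EE (2*n-k))
        = (qb (X^2) (2*n) k * EE k * EE (2*n-k)) * EE n - EE k * EE (2*n-k) := by ring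
      _ = EE (2*n) * EE n - EE k * EE (2*n-k) := by rw [pf]
      _ = (EE k * EE (2*n-k)) * (Gp * Hp - 1) := by rw [hG, hH]; ring
  have hGd : X^(2*k+2) ∣ Gp - 1 := by
    apply prod_one_sub_dvd
    intro i _
    have e : (1 - ((X:P)^2)^(k+i+1)) - 1 = -(((X:P)^2)^(k+i+1)) := by ring
    rw [e, dvd_neg, ← pow_mul]
    exact pow_dvd_pow X (by omega)
  have hHd : X^(2*k+2) ∣ Hp - 1 := by
    apply prod_one_sub_dvd
    intro i _
    have e : (1 - ((X:P)^2)^((2*n-k)+i+1)) - 1 = -(((X:P)^2)^((2*n-k)+i+1)) := by ring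
    rw [e, dvd_neg, ← pow_mul]
    exact pow_dvd_pow X (by omega)
  have hGH : X^(2*k+2) ∣ Gp * Hp - 1 := by
    have e : Gp * Hp - 1 = Gp * (Hp - 1) + (Gp - 1) := by ring
    rw [e]
    exact dvd_add (hHd.mul_left _) hGd
  have hdvd : X^(2*k+2) ∣ (qb (X^2) (2*n) k * EE n - 1) * (EE k * EE (2*n-k)) := by
    rw [key]
    exact hGH.mul_left _
  exact X_dvd_cancel_unit ((isUnit_EE k).mul (isUnit_EE (2*n-k))) hdvd

lemma term_dvd (n k : ℕ) (hn : 1 ≤ n) (hk : k ≤ 2*n) :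
    X^(n:ℕ) ∣ X^(sq n k) * (qb (X^2) (2*n) k * EE n - 1) := by
  suffices h : ∀ j, j ≤ n → X^(n:ℕ) ∣ X^(sq n j) * (qb (X^2) (2*n) j * EE n - 1) by
    rcases le_total k n with hkn | hkn
    · exact h k hkn
    · have h2 := h (2*n-k) (by omega)
      rwa [← sq_symm n k hk, ← qb_symm (2*n) k hk] at h2
  intro j hj
  have hle : n ≤ sq n j + (2*j+2) := by
    have e : j - n = 0 := by omega
    rw [sq, e]
    set d := n - j with hd
    have hdj : d + j = n := by omega
    have hdd : 2*d ≤ d*d + 1 := by nlinarith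
    generalize d*d = D at hdd ⊢
    omega
  calc X^(n:ℕ) ∣ X^(sq n j + (2*j+2)) := pow_dvd_pow X hle
    _ ∣ X^(sq n j) * (qb (X^2) (2*n) j * EE n - 1) := by
        rw [pow_add]
        exact mul_dvd_mul_left _ (qb_approx n j hj)

lemma OE_approx (n : ℕ) (hn : 1 ≤ n) :
    X^(n:ℕ) ∣ (OO n)^2 * EE n - ∑ k ∈ range (2*n+1), (-1:P)^(k+n) * X^(sq n k) := by
  rw [← star n hn, sum_mul, ← sum_sub_distrib]
  refine dvd_sum fun k hk => ?_
  have hk' : k ≤ 2*n := by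
    have := mem_range.mp hk
    omega
  have e : (-1:P)^(k+n) * X^(sq n k) * qb (X^2) (2*n) k * EE n - (-1)^(k+n) * X^(sq n k)
      = (-1)^(k+n) * (X^(sq n k) * (qb (X^2) (2*n) k * EE n - 1)) := by ring
  rw [e]
  exact (term_dvd n k hn hk').mul_left _

/-! ### Coefficients of the theta sum -/

lemma neg_one_pow_eq {a b : ℕ} (h : a % 2 = b % 2) : ((-1:ℤ))^a = (-1)^b := by
  rcases Nat.even_or_odd a with ha | ha
  · have hb : Even b := by
      rw [Nat.even_iff] at *
      omega
    rw [ha.neg_one_pow, hb.neg_one_pow]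
  · have hb : Odd b := by
      rw [Nat.odd_iff] at *
      omega
    rw [ha.neg_one_pow, hb.neg_one_pow]

lemma mul_self_mod_two (j : ℕ) : (j*j) % 2 = j % 2 := by
  have h := Nat.mul_mod j j 2
  rcases Nat.mod_two_eq_zero_or_one j with h1 | h1 <;> rw [h1] at h <;> omega

lemma sq_eq_iff (n k j : ℕ) (hj : j ≤ n) : sq n k = j*j ↔ (k = n - j ∨ k = n + j) := by
  constructor
  · intro h
    rcases le_total k n with hkn | hkn
    · have e1 : k - n = 0 := by omega
      rw [sq, e1, mul_zero, add_zero] at h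
      have := Nat.mul_self_inj.mp h
      omega
    · have e1 : n - k = 0 := by omega
      rw [sq, e1, zero_mul, zero_add] at h
      have := Nat.mul_self_inj.mp h
      omega
  · rintro (rfl | rfl)
    · have e1 : n - (n-j) = j := by omega
      have e2 : (n-j) - n = 0 := by omega
      rw [sq, e1, e2]
      ring
    · have e1 : n - (n+j) = 0 := by omega
      have e2 : (n+j) - n = j := by omega
      rw [sq, e1, e2]
      ring

lemma sqZ_eq_pair (j : ℕ) (hj : 1 ≤ j) :
    {x : ℤ | x^2 = ((j*j : ℕ) : ℤ)} = {(j:ℤ), -(j:ℤ)} := by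
  ext x
  simp only [Set.mem_setOf_eq, Set.mem_insert_iff, Set.mem_singleton_iff]
  push_cast
  constructor
  · intro h
    have h2 : x^2 = (j:ℤ)^2 := by rw [h]; ring
    exact (Commute.all x (j:ℤ)).sq_eq_sq_iff_eq_or_eq_neg.mp h2
  · rintro (rfl | rfl) <;> ring

lemma sqZ_zero : {x : ℤ | x^2 = ((0:ℕ) : ℤ)} = {0} := by
  ext x
  simp [pow_eq_zero_iff]

lemma sqZ_nonsq (m : ℕ) (h : ¬ (Nat.sqrt m * Nat.sqrt m = m)) :
    {x : ℤ | x^2 = (m : ℤ)} = ∅ := by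
  ext x
  simp only [Set.mem_setOf_eq, Set.mem_empty_iff_false, iff_false]
  intro hx
  apply h
  have h1 : ((x.natAbs * x.natAbs : ℕ) : ℤ) = (m : ℤ) := by
    rw [Int.natAbs_mul_self]
    rw [← hx]
    ring
  have h2 : x.natAbs * x.natAbs = m := by exact_mod_cast h1
  rw [← h2]
  have h3 : x.natAbs * x.natAbs = x.natAbs ^ 2 := by ring
  rw [h3, Nat.sqrt_eq']
  ring

lemma theta_coeff (n m : ℕ) (hm : m ≤ n) :
    coeff m (∑ k ∈ range (2*n+1), (-1:P)^(k+n) * X^(sq n k))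
      = (-1)^m * ({x : ℤ | x^2 = (m:ℤ)}.ncard : ℤ) := by
  have hC : ∀ k : ℕ, ((-1:P))^k = C ((-1:ℤ)^k) := by
    intro k
    rw [map_pow, map_neg, map_one]
  rw [map_sum]
  have hterm : ∀ k ∈ range (2*n+1),
      coeff m ((-1:P)^(k+n) * X^(sq n k))
        = if m = sq n k then ((-1:ℤ))^(k+n) else 0 := by
    intro k _
    rw [hC, coeff_C_mul, coeff_X_pow]
    split_ifs <;> ring
  rw [sum_congr rfl hterm, ← sum_filter]
  set j := Nat.sqrt m with hjdef
  by_cases hsq : j * j = m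
  · have hjm : j ≤ n := by
      rcases Nat.eq_zero_or_pos j with h0 | h0
      · omega
      · have h1 : j * 1 ≤ j * j := Nat.mul_le_mul_left j h0
        omega
    by_cases hj0 : j = 0
    · have hm0 : m = 0 := by rw [← hsq, hj0]
      subst hm0
      have hfe : filter (fun k => 0 = sq n k) (range (2*n+1)) = {n} := by
        ext k
        simp only [mem_filter, mem_range, mem_singleton]
        constructor
        · rintro ⟨hk, hk2⟩
          have h2 := (sq_eq_iff n k 0 (by omega)).mp (by omega)
          omega
        · intro hkn
          have h2 := (sq_eq_iff n k 0 (by omega)).mpr (by omega)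
          exact ⟨by omega, by omega⟩
      rw [hfe, sum_singleton, sqZ_zero, Set.ncard_singleton]
      have h1 : ((-1:ℤ))^(n+n) = (-1)^0 := neg_one_pow_eq (by omega)
      rw [h1]
      norm_num
    · have hfe : filter (fun k => m = sq n k) (range (2*n+1)) = {n-j, n+j} := by
        ext k
        simp only [mem_filter, mem_range, mem_insert, mem_singleton]
        constructor
        · rintro ⟨hk, hk2⟩
          exact (sq_eq_iff n k j hjm).mp (by omega)
        · rintro (rfl | rfl)
          · have h2 := (sq_eq_iff n (n-j) j hjm).mpr (Or.inl rfl)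
            exact ⟨by omega, by omega⟩
          · have h2 := (sq_eq_iff n (n+j) j hjm).mpr (Or.inr rfl)
            exact ⟨by omega, by omega⟩
      rw [hfe]
      have hne : (n-j) ≠ (n+j) := by omega
      rw [sum_pair hne]
      have hmj := mul_self_mod_two j
      have hp1 : ((-1:ℤ))^((n-j)+n) = (-1)^m := neg_one_pow_eq (by omega)
      have hp2 : ((-1:ℤ))^((n+j)+n) = (-1)^m := neg_one_pow_eq (by omega)
      have hcard : ({x : ℤ | x^2 = (m:ℤ)}.ncard : ℤ) = 2 := by
        rw [show ((m:ℕ):ℤ) = ((j*j:ℕ):ℤ) from by exact_mod_cast hsq.symm]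
        rw [sqZ_eq_pair j (by omega), Set.ncard_pair (by
          have h1 : (1:ℤ) ≤ (j:ℤ) := by exact_mod_cast (by omega : 1 ≤ j)
          omega)]
        norm_num
      rw [hp1, hp2, hcard]
      ring
  · have hfe : filter (fun k => m = sq n k) (range (2*n+1)) = ∅ := by
      rw [filter_eq_empty_iff]
      intro k hk hmk
      apply hsq
      rw [hjdef]
      rcases le_total k n with hkn | hkn
      · have e1 : k - n = 0 := by omega
        have hm2 : m = (n-k)^2 := by rw [hmk, sq, e1]; ring
        rw [hm2, Nat.sqrt_eq']
        ring
      · have e1 : n - k = 0 := by omega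
        have hm2 : m = (k-n)^2 := by rw [hmk, sq, e1]; ring
        rw [hm2, Nat.sqrt_eq']
        ring
    rw [hfe, sum_empty, sqZ_nonsq m (by rw [← hjdef]; exact hsq), Set.ncard_empty]
    ring


/-! ### Counting coefficients: machinery from Archive.Wiedijk100Theorems.Partition -/

open scoped Classical

universe u
variable {α : Type*} {ι : Type u}

def partialDistinctGF (m : ℕ) [CommSemiring α] :=
  ∏ i ∈ range m, (1 + (X : PowerSeries α) ^ (i + 1))

open Finset.HasAntidiagonal

/-- A convenience constructor for the power series whose coefficients indicate a subset. -/
def indicatorSeries (α : Type*) [Semiring α] (s : Set ℕ) : PowerSeries α :=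
  PowerSeries.mk fun n => if n ∈ s then 1 else 0

theorem coeff_indicator (s : Set ℕ) [Semiring α] (n : ℕ) :
    coeff n (indicatorSeries α s) = if n ∈ s then 1 else 0 :=
  coeff_mk _ _

theorem coeff_indicator_pos (s : Set ℕ) [Semiring α] (n : ℕ) (h : n ∈ s) :
    coeff n (indicatorSeries α s) = 1 := by rw [coeff_indicator, if_pos h]

theorem coeff_indicator_neg (s : Set ℕ) [Semiring α] (n : ℕ) (h : n ∉ s) :
    coeff n (indicatorSeries α s) = 0 := by rw [coeff_indicator, if_neg h]

theorem constantCoeff_indicator (s : Set ℕ) [Semiring α] :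
    constantCoeff (indicatorSeries α s) = if 0 ∈ s then 1 else 0 :=
  rfl

theorem two_series (i : ℕ) [Semiring α] :
    1 + (X : PowerSeries α) ^ i.succ = indicatorSeries α {0, i.succ} := by
  ext n
  simp only [coeff_indicator, coeff_one, coeff_X_pow, Set.mem_insert_iff, Set.mem_singleton_iff,
    map_add]
  cases' n with d
  · simp [(Nat.succ_ne_zero i).symm]
  · simp [Nat.succ_ne_zero d]

theorem num_series' [Field α] (i : ℕ) :
    (1 - (X : PowerSeries α) ^ (i + 1))⁻¹ = indicatorSeries α {k | i + 1 ∣ k} := by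
  rw [PowerSeries.inv_eq_iff_mul_eq_one]
  · ext n
    cases n with
    | zero => simp [mul_sub, zero_pow, constantCoeff_indicator]
    | succ n =>
      simp only [coeff_one, if_false, mul_sub, mul_one, coeff_indicator,
        LinearMap.map_sub, reduceCtorEq]
      simp_rw [coeff_mul, coeff_X_pow, coeff_indicator, @boole_mul _ _ _ _]
      simp only [← ite_and, Set.mem_setOf_eq, sum_boole]
      simp_rw [
        sub_eq_iff_eq_add, zero_add]
      symm
      split_ifs with h
      · suffices #{a ∈ antidiagonal (n + 1) | i + 1 ∣ a.fst ∧ a.snd = i + 1} = 1 by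
          convert congr_arg ((↑) : ℕ → α) this; norm_cast
        rw [card_eq_one]
        cases' h with p hp
        refine ⟨((i + 1) * (p - 1), i + 1), ?_⟩
        ext ⟨a₁, a₂⟩
        simp only [mem_filter, Prod.mk.injEq, Finset.HasAntidiagonal.mem_antidiagonal, mem_singleton]
        constructor
        · rintro ⟨a_left, ⟨a, rfl⟩, rfl⟩
          refine ⟨?_, rfl⟩
          rw [Nat.mul_sub_left_distrib, ← hp, ← a_left, mul_one, Nat.add_sub_cancel]
        · rintro ⟨rfl, rfl⟩
          match p with
          | 0 => rw [mul_zero] at hp; cases hp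
          | p + 1 => rw [hp]; simp [mul_add]
      · suffices #{a ∈ antidiagonal (n + 1) | i + 1 ∣ a.fst ∧ a.snd = i + 1} = 0 by
          convert congr_arg ((↑) : ℕ → α) this; norm_cast
        rw [card_eq_zero]
        apply eq_empty_of_forall_notMem
        simp only [Prod.forall, mem_filter, not_and, Finset.HasAntidiagonal.mem_antidiagonal]
        rintro _ h₁ h₂ ⟨a, rfl⟩ rfl
        apply h
        simp [← h₂]
  · rw [map_sub, map_one, map_pow, constantCoeff_X, zero_pow (Nat.succ_ne_zero i), sub_zero]
    exact one_ne_zero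


-- The main workhorse of the partition theorem proof.
theorem partialGF_prop (α : Type*) [CommSemiring α] (n : ℕ) (s : Finset ℕ) (hs : ∀ i ∈ s, 0 < i)
    (c : ℕ → Set ℕ) (hc : ∀ i, i ∉ s → 0 ∈ c i) :
    #{p : n.Partition | (∀ j, p.parts.count j ∈ c j) ∧ ∀ j ∈ p.parts, j ∈ s} =
      coeff n (∏ i ∈ s, indicatorSeries α ((· * i) '' c i)) := by
  simp_rw [coeff_prod, coeff_indicator, prod_boole, sum_boole]
  apply congr_arg
  simp only [mem_univ, forall_true_left, not_and, not_forall, exists_prop,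
    Set.mem_image, not_exists]
  set φ : (a : Nat.Partition n) →
    a ∈ filter (fun p ↦ (∀ (j : ℕ), Multiset.count j p.parts ∈ c j) ∧ ∀ j ∈ p.parts, j ∈ s) univ →
    ℕ →₀ ℕ := fun p _ => {
      toFun := fun i => Multiset.count i p.parts • i
      support := Finset.filter (fun i => i ≠ 0) p.parts.toFinset
      mem_support_toFun := fun a => by
        simp only [smul_eq_mul, ne_eq, mul_eq_zero, Multiset.count_eq_zero]
        rw [not_or, not_not]
        simp only [Multiset.mem_toFinset, not_not, mem_filter] }
  refine Finset.card_bij φ ?_ ?_ ?_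
  · intro a ha
    simp only [φ, not_forall, not_exists, not_and, exists_prop, mem_filter]
    rw [mem_finsuppAntidiag]
    dsimp only [ne_eq, smul_eq_mul, id_eq, eq_mpr_eq_cast, le_eq_subset, Finsupp.coe_mk]
    simp only [mem_univ, forall_true_left, not_and, not_forall, exists_prop,
      mem_filter, true_and] at ha
    refine ⟨⟨?_, fun i ↦ ?_⟩, fun i _ ↦ ⟨a.parts.count i, ha.1 i, rfl⟩⟩
    · conv_rhs => simp [← a.parts_sum]
      rw [sum_multiset_count_of_subset _ s]
      · simp only [smul_eq_mul]
      · intro i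
        simp only [Multiset.mem_toFinset, not_not, mem_filter]
        apply ha.2
    · simp only [ne_eq, Multiset.mem_toFinset, not_not, mem_filter, and_imp]
      exact fun hi _ ↦ ha.2 i hi
  · intro p₁ hp₁ p₂ hp₂ h
    apply Nat.Partition.ext
    simp only [true_and, mem_univ, mem_filter] at hp₁ hp₂
    ext i
    simp only [φ, ne_eq, Multiset.mem_toFinset, not_not, smul_eq_mul, Finsupp.mk.injEq] at h
    by_cases hi : i = 0
    · rw [hi]
      rw [Multiset.count_eq_zero_of_notMem]
      · rw [Multiset.count_eq_zero_of_notMem]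
        intro a; exact Nat.lt_irrefl 0 (hs 0 (hp₂.2 0 a))
      intro a; exact Nat.lt_irrefl 0 (hs 0 (hp₁.2 0 a))
    · rw [← mul_left_inj' hi]
      rw [funext_iff] at h
      exact h.2 i
  · simp only [φ, mem_filter, mem_finsuppAntidiag, mem_univ, exists_prop, true_and, and_assoc]
    rintro f ⟨hf, hf₃, hf₄⟩
    have hf' : f ∈ finsuppAntidiag s n := mem_finsuppAntidiag.mpr ⟨hf, hf₃⟩
    simp only [mem_finsuppAntidiag] at hf'
    refine ⟨⟨∑ i ∈ s, Multiset.replicate (f i / i) i, ?_, ?_⟩, ?_, ?_, ?_⟩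
    · intro i hi
      simp only [exists_prop, Multiset.mem_sum, mem_map, Function.Embedding.coeFn_mk] at hi
      rcases hi with ⟨t, ht, z⟩
      apply hs
      rwa [Multiset.eq_of_mem_replicate z]
    · simp_rw [Multiset.sum_sum, Multiset.sum_replicate, Nat.nsmul_eq_mul]
      rw [← hf'.1]
      refine sum_congr rfl fun i hi => Nat.div_mul_cancel ?_
      rcases hf₄ i hi with ⟨w, _, hw₂⟩
      rw [← hw₂]
      exact dvd_mul_left _ _
    · intro i
      simp_rw [Multiset.count_sum', Multiset.count_replicate, sum_ite_eq']
      split_ifs with h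
      · rcases hf₄ i h with ⟨w, hw₁, hw₂⟩
        rwa [← hw₂, Nat.mul_div_cancel _ (hs i h)]
      · exact hc _ h
    · intro i hi
      rw [Multiset.mem_sum] at hi
      rcases hi with ⟨j, hj₁, hj₂⟩
      rwa [Multiset.eq_of_mem_replicate hj₂]
    · ext i
      simp_rw [Multiset.count_sum', Multiset.count_replicate, sum_ite_eq']
      simp only [ne_eq, Multiset.mem_toFinset, not_not, smul_eq_mul, ite_mul,
        zero_mul, Finsupp.coe_mk]
      split_ifs with h
      · apply Nat.div_mul_cancel
        rcases hf₄ i h with ⟨w, _, hw₂⟩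
        apply Dvd.intro_left _ hw₂
      · apply symm
        rw [← Finsupp.notMem_support_iff]
        exact notMem_mono hf'.2 h



def mkOdd : ℕ ↪ ℕ :=
  ⟨fun i => 2 * i + 1, fun x y h => by linarith⟩

theorem partialDistinctGF_prop [CommSemiring α] (n m : ℕ) :
    #{p : n.Partition |
        p.parts.Nodup ∧ ∀ j ∈ p.parts, j ∈ (range m).map ⟨Nat.succ, Nat.succ_injective⟩} =
      coeff n (partialDistinctGF (α := α) m) := by
  rw [partialDistinctGF]
  convert partialGF_prop α n
    ((range m).map ⟨Nat.succ, Nat.succ_injective⟩) _ (fun _ => {0, 1}) (fun _ _ => Or.inl rfl)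
    using 2
  · congr! with p
    rw [Multiset.nodup_iff_count_le_one]
    congr! 1 with i
    rcases Multiset.count i p.parts with (_ | _ | ms) <;> simp
  · simp_rw [Finset.prod_map, two_series]
    congr with i
    simp [Set.image_pair]
  · simp only [mem_map, Function.Embedding.coeFn_mk]
    rintro i ⟨_, _, rfl⟩
    apply Nat.succ_pos


theorem distinctGF_prop [CommSemiring α] (n m : ℕ) (h : n < m + 1) :
    #(Nat.Partition.distincts n) = coeff n (partialDistinctGF (α := α) m) := by
  rw [← partialDistinctGF_prop, Nat.Partition.distincts]
  congr with p
  apply (and_iff_left _).symm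
  intro i hi
  have : i ≤ n := by
    simpa [p.parts_sum] using Multiset.single_le_sum (fun _ _ => Nat.zero_le _) _ hi
  simp only [mkOdd, exists_prop, mem_range, Function.Embedding.coeFn_mk, mem_map]
  refine ⟨i - 1, ?_, Nat.succ_pred_eq_of_pos (p.parts_pos hi)⟩
  rw [tsub_lt_iff_right (Nat.one_le_iff_ne_zero.mpr (p.parts_pos hi).ne')]
  exact lt_of_le_of_lt this h


/-! ### The ordinary-partition inverse factors over ℤ -/

def partialMulInv (m : ℕ) : P := ∏ i ∈ range m, indicatorSeries ℤ {k | (i+1) ∣ k}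

lemma one_sub_X_mul_ind (s : ℕ) (hs : 0 < s) :
    (1 - (X:P)^s) * indicatorSeries ℤ {k | s ∣ k} = 1 := by
  have e : (1 - (X:P)^s) * indicatorSeries ℤ {k | s ∣ k}
      = indicatorSeries ℤ {k | s ∣ k} - X^s * indicatorSeries ℤ {k | s ∣ k} := by ring
  rw [e]
  ext n
  rw [map_sub, coeff_indicator]
  rcases lt_or_ge n s with h | h
  · have hz : coeff n ((X:P)^s * indicatorSeries ℤ {k | s ∣ k}) = 0 :=
      X_pow_dvd_iff.mp (dvd_mul_right _ _) n h
    rw [hz, sub_zero, coeff_one]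
    by_cases h0 : n = 0
    · subst h0
      rw [if_pos (Set.mem_setOf_eq ▸ dvd_zero s), if_pos rfl]
    · rw [if_neg, if_neg h0]
      intro hd
      have := Nat.le_of_dvd (Nat.pos_of_ne_zero h0) hd
      omega
  · obtain ⟨d, rfl⟩ : ∃ d, n = d + s := ⟨n - s, by omega⟩
    rw [coeff_X_pow_mul, coeff_indicator, coeff_one]
    have hiff : (d + s ∈ {k | s ∣ k}) ↔ (d ∈ {k | s ∣ k}) := by
      simp only [Set.mem_setOf_eq]
      exact Nat.dvd_add_self_right
    have hne : ¬ (d + s = 0) := by omega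
    rw [if_neg hne]
    by_cases hd : d ∈ {k | s ∣ k}
    · rw [if_pos (hiff.mpr hd), if_pos hd, sub_self]
    · rw [if_neg (fun hh => hd (hiff.mp hh)), if_neg hd, sub_self]

lemma UU_mul_inv (m : ℕ) : UU m * partialMulInv m = 1 := by
  rw [UU, partialMulInv, ← prod_mul_distrib]
  apply prod_eq_one
  intro i _
  exact one_sub_X_mul_ind (i+1) (by omega)

lemma coeff_partialMulInv (n m : ℕ) (h : n ≤ m) :
    coeff n (partialMulInv m) = Fintype.card (Nat.Partition n) := by
  have hs : ∀ i ∈ (range m).map ⟨Nat.succ, Nat.succ_injective⟩, 0 < i := by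
    simp only [mem_map, Function.Embedding.coeFn_mk]
    rintro i ⟨_, _, rfl⟩
    apply Nat.succ_pos
  have hprop := partialGF_prop ℤ n ((range m).map ⟨Nat.succ, Nat.succ_injective⟩) hs
    (fun _ => Set.univ) (fun _ _ => trivial)
  have hgf : ∏ i ∈ (range m).map ⟨Nat.succ, Nat.succ_injective⟩,
      indicatorSeries ℤ ((· * i) '' Set.univ) = partialMulInv m := by
    rw [Finset.prod_map, partialMulInv]
    refine prod_congr rfl fun i _ => ?_
    have hset : ((· * i.succ) '' Set.univ : Set ℕ) = {k | i+1 ∣ k} := by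
      ext k
      simp only [Set.mem_image, Set.mem_univ, true_and, Set.mem_setOf_eq]
      constructor
      · rintro ⟨a, rfl⟩
        exact Dvd.intro_left a rfl
      · rintro ⟨c, rfl⟩
        exact ⟨c, mul_comm _ _⟩
    simp only [Function.Embedding.coeFn_mk]
    rw [hset]
  rw [hgf] at hprop
  rw [← hprop]
  congr 1
  have : Finset.filter (fun p : Nat.Partition n =>
      (∀ j : ℕ, p.parts.count j ∈ (fun _ => (Set.univ : Set ℕ)) j) ∧
        ∀ j ∈ p.parts, j ∈ (range m).map ⟨Nat.succ, Nat.succ_injective⟩) univ = univ := by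
    apply filter_true_of_mem
    intro p _
    refine ⟨fun _ => trivial, fun j hj => ?_⟩
    have hj1 : 0 < j := p.parts_pos hj
    have hjn : j ≤ n := by
      simpa [p.parts_sum] using Multiset.single_le_sum (fun _ _ => Nat.zero_le _) _ hj
    simp only [mem_map, mem_range, Function.Embedding.coeFn_mk]
    exact ⟨j - 1, by omega, by omega⟩
  rw [this, card_univ]

lemma VV_eq (m : ℕ) : VV m = partialDistinctGF (α := ℤ) m := rfl

lemma coeff_VPinv (n m : ℕ) (h : n ≤ m) :
    coeff n (VV m * partialMulInv m) = (overpartition n : ℤ) := by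
  rw [coeff_mul, Finset.Nat.sum_antidiagonal_eq_sum_range_succ_mk, overpartition]
  push_cast
  refine sum_congr rfl fun k hk => ?_
  have hk' : k ≤ n := by
    have := mem_range.mp hk
    omega
  have h1 : coeff k (VV m) = ((Nat.Partition.distincts k).card : ℤ) := by
    rw [VV_eq, ← distinctGF_prop (α := ℤ) k m (by omega)]
  have h2 : coeff (n-k) (partialMulInv m) = (Fintype.card (Nat.Partition (n-k)) : ℤ) :=
    coeff_partialMulInv (n-k) m (by omega)
  rw [h1, h2]

lemma counting (m : ℕ) :
    X^(m+1:ℕ) ∣ (PowerSeries.mk fun j => (overpartition j : ℤ)) * UU m - VV m := by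
  have h1 : X^(m+1:ℕ) ∣ ((PowerSeries.mk fun j => (overpartition j : ℤ))
      - VV m * partialMulInv m) := by
    rw [X_pow_dvd_iff]
    intro d hd
    rw [map_sub, coeff_mk, coeff_VPinv d m (by omega), sub_self]
  have h2 := h1.mul_right (UU m)
  have e : ((PowerSeries.mk fun j => (overpartition j : ℤ)) - VV m * partialMulInv m) * UU m
      = (PowerSeries.mk fun j => (overpartition j : ℤ)) * UU m - VV m := by
    have h3 := UU_mul_inv m
    calc ((PowerSeries.mk fun j => (overpartition j : ℤ)) - VV m * partialMulInv m) * UU m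
        = (PowerSeries.mk fun j => (overpartition j : ℤ)) * UU m
            - VV m * (UU m * partialMulInv m) := by ring
      _ = (PowerSeries.mk fun j => (overpartition j : ℤ)) * UU m - VV m := by
          rw [h3, mul_one]
  rwa [e] at h2

theorem main_rescaled :
    rescale (-1 : ℤ) phiq * (PowerSeries.mk fun j => (overpartition j : ℤ)) = 1 := by
  set G : P := PowerSeries.mk fun j => (overpartition j : ℤ) with hGdef
  apply PowerSeries.ext
  intro N
  suffices hdvd : X^(N+1:ℕ) ∣ rescale (-1 : ℤ) phiq * G - 1 by
    have h0 := X_pow_dvd_iff.mp hdvd N (by omega)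
    rw [map_sub] at h0
    exact sub_eq_zero.mp h0
  set n := N + 1 with hn
  have hn1 : 1 ≤ n := by omega
  have h1 : X^(N+1:ℕ) ∣ G * UU (2*n) - VV (2*n) :=
    (pow_dvd_pow X (by omega)).trans (counting (2*n))
  have hUs : UU (2*n) = OO n * EE n := UU_split n
  have hVE : VV (2*n) * (OO n * EE n) = EE (2*n) := by
    rw [← hUs]
    exact VV_mul_UU (2*n)
  have h4 : X^(N+1:ℕ) ∣ (OO n)^2 * EE n - rescale (-1 : ℤ) phiq := by
    have ha : X^(n:ℕ) ∣ (OO n)^2 * EE n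
        - ∑ k ∈ range (2*n+1), (-1:P)^(k+n) * X^(sq n k) := OE_approx n hn1
    have hb : X^(n:ℕ) ∣ (∑ k ∈ range (2*n+1), (-1:P)^(k+n) * X^(sq n k))
        - rescale (-1 : ℤ) phiq := by
      rw [X_pow_dvd_iff]
      intro d hd
      rw [map_sub, theta_coeff n d (by omega), coeff_rescale, phiq, coeff_mk, sub_self]
    have e : (OO n)^2 * EE n - rescale (-1 : ℤ) phiq
        = ((OO n)^2 * EE n - ∑ k ∈ range (2*n+1), (-1:P)^(k+n) * X^(sq n k))
          + ((∑ k ∈ range (2*n+1), (-1:P)^(k+n) * X^(sq n k)) - rescale (-1 : ℤ) phiq) := by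
      ring
    rw [e, hn]
    exact dvd_add ha hb
  have d1 : X^(N+1:ℕ) ∣ G * ((OO n)^2 * EE n * EE n) - EE (2*n) := by
    have hd := h1.mul_right (OO n * EE n)
    have e : (G * UU (2*n) - VV (2*n)) * (OO n * EE n)
        = G * ((OO n)^2 * EE n * EE n) - EE (2*n) := by
      rw [hUs, ← hVE]
      ring
    rwa [e] at hd
  have d2 : X^(N+1:ℕ) ∣ G * ((OO n)^2 * EE n * EE n) - rescale (-1 : ℤ) phiq * G * EE n := by
    have hd := h4.mul_right (G * EE n)
    have e : ((OO n)^2 * EE n - rescale (-1 : ℤ) phiq) * (G * EE n)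
        = G * ((OO n)^2 * EE n * EE n) - rescale (-1 : ℤ) phiq * G * EE n := by ring
    rwa [e] at hd
  have d3 : X^(N+1:ℕ) ∣ EE (2*n) - EE n := by
    have h := qP_add (X^2) n n
    rw [show n + n = 2*n from by omega] at h
    have h' : EE (2*n) = EE n * ∏ i ∈ range n, (1 - ((X:P)^2)^(n+i+1)) := h
    have hW : X^(N+1:ℕ) ∣ (∏ i ∈ range n, (1 - ((X:P)^2)^(n+i+1))) - 1 := by
      apply prod_one_sub_dvd
      intro i _
      have e : (1 - ((X:P)^2)^(n+i+1)) - 1 = -(((X:P)^2)^(n+i+1)) := by ring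
      rw [e, dvd_neg, ← pow_mul]
      exact pow_dvd_pow X (by omega)
    have e : EE (2*n) - EE n
        = ((∏ i ∈ range n, (1 - ((X:P)^2)^(n+i+1))) - 1) * EE n := by
      rw [h']
      ring
    rw [e]
    exact hW.mul_right _
  have hfinal : X^(N+1:ℕ) ∣ (rescale (-1 : ℤ) phiq * G - 1) * EE n := by
    have e : (rescale (-1 : ℤ) phiq * G - 1) * EE n
        = (G * ((OO n)^2 * EE n * EE n) - EE (2*n))
          - (G * ((OO n)^2 * EE n * EE n) - rescale (-1 : ℤ) phiq * G * EE n)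
          + (EE (2*n) - EE n) := by ring
    rw [e]
    exact dvd_add (dvd_sub d1 d2) d3
  exact X_dvd_cancel_unit (isUnit_EE n) hfinal

end
end OPF

theorem phiq_mul_overpartitionGF_eq_one :
    phiq * PowerSeries.mk (fun n => ((-1) ^ n * overpartition n : ℤ)) = 1 := by
  have key := OPF.main_rescaled
  have h2 := congrArg (PowerSeries.rescale (-1 : ℤ)) key
  rw [map_mul, map_one, PowerSeries.rescale_rescale,
    show ((-1:ℤ)*(-1)) = 1 from by norm_num, PowerSeries.rescale_one, RingHom.id_apply,
    PowerSeries.rescale_mk] at h2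
  exact h2
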